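/- Let B be a labeled abstract rewrite system and ≺ a transitive, well-founded relation on its labels. If every local peak of B is decreasing, then every peak of B is decreasing. -/

import Mathlib

open Relation

universe u v

variable {α : Type u} {β : Type v}

/-- down-set of a set of labels -/
def ds (r : β → β → Prop) (S : Set β) : Set β := {b | ∃ a ∈ S, r b a}

/-- down-set of a multiset of labels -/
def dm (r : β → β → Prop) (M : Multiset β) : Set β := ds r {a | a ∈ M}

/-- down-set of a list of labels -/
def dl (r : β → β → Prop) (σ : List β) : Set β := ds r {a | a ∈ σ}

/-- `M -s S`: remove from the multiset `M` all occurrences of elements of the set `S` -/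
noncomputable def msub (M : Multiset β) (S : Set β) : Multiset β :=
  @Multiset.filter β (fun a => a ∉ S) (Classical.decPred _) M

/-- `M ≼_mul N` -/
def mulLe (r : β → β → Prop) (M N : Multiset β) : Prop :=
  ∃ I J K : Multiset β, M = I + K ∧ N = I + J ∧ ∀ k ∈ K, k ∈ dm r J

/-- `M ≺_mul N`: the multiset extension of `r` -/
def mulLt (r : β → β → Prop) (M N : Multiset β) : Prop :=
  ∃ I J K : Multiset β, M = I + K ∧ N = I + J ∧ (∀ k ∈ K, k ∈ dm r J) ∧ J ≠ 0

/-- the one-step multiset extension of `r` -/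
def mult1 (r : β → β → Prop) (M N : Multiset β) : Prop :=
  ∃ (a : β) (I K : Multiset β), M = I + K ∧ N = I + {a} ∧ ∀ b ∈ K, r b a

/-- the lexicographic maximum measure `|σ|` -/
noncomputable def lexmax (r : β → β → Prop) : List β → Multiset β
  | [] => 0
  | a :: σ => {a} + msub (lexmax r σ) (ds r {a})

/-- the quadruple of label lists `(τ, σ, σ', τ')` is decreasing -/
def Decreasing (r : β → β → Prop) (τ σ σ' τ' : List β) : Prop :=
  mulLe r (lexmax r (σ ++ τ')) (lexmax r τ + lexmax r σ) ∧
  mulLe r (lexmax r (τ ++ σ')) (lexmax r τ + lexmax r σ)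

/-- labeled rewrite sequences of the labeled ARS `B` -/
inductive LSeq (B : α → β → α → Prop) : α → List β → α → Prop
  | nil (a : α) : LSeq B a [] a
  | cons {a b c : α} {l : β} {σ : List β} :
      B a l b → LSeq B b σ c → LSeq B a (l :: σ) c

/-- labeled conversions of the labeled ARS `B` -/
inductive Conv (B : α → β → α → Prop) : α → List β → α → Prop
  | nil (a : α) : Conv B a [] a
  | fwd {a b c : α} {l : β} {σ : List β} :
      B a l b → Conv B b σ c → Conv B a (l :: σ) c
  | bwd {a b c : α} {l : β} {σ : List β} :
      B b l a → Conv B b σ c → Conv B a (l :: σ) c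

/-- the local peak `b ←lb a →lc c` is decreasing with respect to conversions -/
def LDConv (B : α → β → α → Prop) (r : β → β → Prop) (b c : α) (lb lc : β) : Prop :=
  ∃ (d b1 b2 c1 c2 : α) (σ1 σ3 τ1 τ3 : List β),
    Conv B b σ1 b1 ∧ (∀ l ∈ σ1, l ∈ ds r ({lc} : Set β)) ∧
    (b1 = b2 ∨ B b1 lb b2) ∧
    Conv B b2 σ3 d ∧ (∀ l ∈ σ3, l ∈ ds r ({lc, lb} : Set β)) ∧
    Conv B c τ1 c1 ∧ (∀ l ∈ τ1, l ∈ ds r ({lb} : Set β)) ∧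
    (c1 = c2 ∨ B c1 lc c2) ∧
    Conv B c2 τ3 d ∧ (∀ l ∈ τ3, l ∈ ds r ({lc, lb} : Set β))

/-- confluence of an abstract rewrite system -/
def Confluent (A : α → α → Prop) : Prop :=
  ∀ a b c : α, ReflTransGen A a b → ReflTransGen A a c →
    ∃ d, ReflTransGen A b d ∧ ReflTransGen A c d

section Aux

variable {r : β → β → Prop}

/-! ### membership lemmas -/

lemma mem_ds {S : Set β} {x : β} : x ∈ ds r S ↔ ∃ a ∈ S, r x a := Iff.rfl

lemma mem_dm {M : Multiset β} {x : β} : x ∈ dm r M ↔ ∃ a ∈ M, r x a := Iff.rfl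

lemma mem_dl {σ : List β} {x : β} : x ∈ dl r σ ↔ ∃ a ∈ σ, r x a := Iff.rfl

lemma mem_msub {M : Multiset β} {S : Set β} {x : β} :
    x ∈ msub M S ↔ x ∈ M ∧ x ∉ S := by
  exact @Multiset.mem_filter β (fun a => a ∉ S) (Classical.decPred _) x M

lemma msub_le (M : Multiset β) (S : Set β) : msub M S ≤ M := by
  exact @Multiset.filter_le β (fun a => a ∉ S) (Classical.decPred _) M

lemma msub_add (M N : Multiset β) (S : Set β) :
    msub (M + N) S = msub M S + msub N S := by
  exact @Multiset.filter_add β (fun a => a ∉ S) (Classical.decPred _) M N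

lemma msub_zero (S : Set β) : msub (0 : Multiset β) S = 0 := rfl

lemma msub_msub (M : Multiset β) (S T : Set β) :
    msub (msub M S) T = msub M (S ∪ T) := by
  unfold msub
  rw [@Multiset.filter_filter β (fun a => a ∉ T) (Classical.decPred _) (fun a => a ∉ S)
    (Classical.decPred _) M]
  congr! 1
  simp only [Set.mem_union]
  tauto

lemma msub_empty (M : Multiset β) : msub M (∅ : Set β) = M := by
  exact (@Multiset.filter_eq_self β (fun a => a ∉ (∅ : Set β)) (Classical.decPred _) M).2
    (fun a _ => Set.notMem_empty a)

lemma msub_union_le (M : Multiset β) (S T : Set β) :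
    msub M (S ∪ T) ≤ msub M T := by
  rw [Set.union_comm, ← msub_msub]
  exact msub_le _ _

/-- decomposition of a multiset into the part outside `S` and a part inside `S` -/
lemma msub_decomp (M : Multiset β) (S : Set β) :
    ∃ Q : Multiset β, M = msub M S + Q ∧ ∀ x ∈ Q, x ∈ S := by
  classical
  refine ⟨M - msub M S, (add_tsub_cancel_of_le (msub_le M S)).symm, fun x hx => ?_⟩
  by_contra hxS
  have h1 : Multiset.count x (msub M S) = Multiset.count x M := by
    unfold msub
    exact @Multiset.count_filter_of_pos β _ (fun a => a ∉ S) (Classical.decPred _) x M hxS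
  have h2 : 0 < Multiset.count x (M - msub M S) := Multiset.count_pos.2 hx
  rw [Multiset.count_sub, h1] at h2
  omega

lemma msub_split (M : Multiset β) (S T : Set β) :
    ∃ R : Multiset β, msub M S = msub M (S ∪ T) + R ∧ ∀ x ∈ R, x ∈ T ∧ x ∉ S := by
  obtain ⟨Q, h1, h2⟩ := msub_decomp (msub M S) T
  rw [msub_msub] at h1
  refine ⟨Q, h1, fun x hx => ⟨h2 x hx, ?_⟩⟩
  have : x ∈ msub M S := by
    rw [h1]
    exact Multiset.mem_add.2 (Or.inr hx)
  exact (mem_msub.1 this).2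

/-! ### dl / dm lemmas -/

lemma dl_nil : dl r ([] : List β) = ∅ := by
  ext x
  simp [dl, ds]

lemma dl_cons (a : β) (σ : List β) : dl r (a :: σ) = ds r {a} ∪ dl r σ := by
  ext x
  simp only [dl, ds, Set.mem_union, Set.mem_setOf_eq, List.mem_cons, Set.mem_singleton_iff]
  constructor
  · rintro ⟨y, (h | h), hr⟩
    · exact Or.inl ⟨y, h, hr⟩
    · exact Or.inr ⟨y, h, hr⟩
  · rintro (⟨y, h, hr⟩ | ⟨y, h, hr⟩)
    · exact ⟨y, Or.inl h, hr⟩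
    · exact ⟨y, Or.inr h, hr⟩

lemma dl_append (σ τ : List β) : dl r (σ ++ τ) = dl r σ ∪ dl r τ := by
  ext x
  simp only [dl, ds, Set.mem_union, Set.mem_setOf_eq, List.mem_append]
  constructor
  · rintro ⟨y, (h | h), hr⟩
    · exact Or.inl ⟨y, h, hr⟩
    · exact Or.inr ⟨y, h, hr⟩
  · rintro (⟨y, h, hr⟩ | ⟨y, h, hr⟩)
    · exact ⟨y, Or.inl h, hr⟩
    · exact ⟨y, Or.inr h, hr⟩

lemma dm_add (M N : Multiset β) : dm r (M + N) = dm r M ∪ dm r N := by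
  ext x
  simp only [dm, ds, Set.mem_union, Set.mem_setOf_eq, Multiset.mem_add]
  constructor
  · rintro ⟨y, (h | h), hr⟩
    · exact Or.inl ⟨y, h, hr⟩
    · exact Or.inr ⟨y, h, hr⟩
  · rintro (⟨y, h, hr⟩ | ⟨y, h, hr⟩)
    · exact ⟨y, Or.inl h, hr⟩
    · exact ⟨y, Or.inr h, hr⟩

/-! ### lexmax lemmas -/

lemma lexmax_nil : lexmax r ([] : List β) = 0 := rfl

lemma lexmax_cons (a : β) (σ : List β) :
    lexmax r (a :: σ) = {a} + msub (lexmax r σ) (ds r {a}) := rfl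

lemma lexmax_singleton (a : β) : lexmax r [a] = {a} := by
  rw [lexmax_cons, lexmax_nil, msub_zero, add_zero]

lemma lexmax_append (σ τ : List β) :
    lexmax r (σ ++ τ) = lexmax r σ + msub (lexmax r τ) (dl r σ) := by
  induction σ with
  | nil => simp [lexmax_nil, dl_nil, msub_empty]
  | cons a σ ih =>
    rw [List.cons_append, lexmax_cons, ih, msub_add, msub_msub, lexmax_cons,
      dl_cons, add_assoc, Set.union_comm]

lemma mem_lexmax {σ : List β} {x : β} (h : x ∈ lexmax r σ) : x ∈ σ := by
  induction σ with
  | nil => simp [lexmax_nil] at h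
  | cons a σ ih =>
    rw [lexmax_cons] at h
    rcases Multiset.mem_add.1 h with h | h
    · simp only [Multiset.mem_singleton] at h
      simp [h]
    · exact List.mem_cons_of_mem _ (ih (mem_msub.1 h).1)

lemma mem_lexmax_or_dm (htrans : Transitive r) {σ : List β} {x : β} (h : x ∈ σ) :
    x ∈ lexmax r σ ∨ x ∈ dm r (lexmax r σ) := by
  induction σ with
  | nil => simp at h
  | cons a σ ih =>
    have hmem : a ∈ lexmax r (a :: σ) := by
      rw [lexmax_cons]
      exact Multiset.mem_add.2 (Or.inl (Multiset.mem_singleton_self _))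
    rcases List.mem_cons.1 h with rfl | h
    · exact Or.inl hmem
    · rcases ih h with hx | hx
      · by_cases hds : x ∈ ds r {a}
        · rcases mem_ds.1 hds with ⟨y, hy, hr⟩
          refine Or.inr (mem_dm.2 ⟨a, hmem, ?_⟩)
          rwa [Set.mem_singleton_iff.1 hy] at hr
        · refine Or.inl ?_
          rw [lexmax_cons]
          exact Multiset.mem_add.2 (Or.inr (mem_msub.2 ⟨hx, hds⟩))
      · rcases mem_dm.1 hx with ⟨y, hy, hr⟩
        by_cases hds : y ∈ ds r {a}
        · rcases mem_ds.1 hds with ⟨z, hz, hrz⟩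
          refine Or.inr (mem_dm.2 ⟨a, hmem, ?_⟩)
          rw [Set.mem_singleton_iff.1 hz] at hrz
          exact htrans hr hrz
        · refine Or.inr (mem_dm.2 ⟨y, ?_, hr⟩)
          rw [lexmax_cons]
          exact Multiset.mem_add.2 (Or.inr (mem_msub.2 ⟨hy, hds⟩))

/-- key lemma: the down-set of a list equals the down-set of its measure -/
lemma dl_eq_dm (htrans : Transitive r) (σ : List β) :
    dl r σ = dm r (lexmax r σ) := by
  ext x
  constructor
  · rintro ⟨y, hy, hr⟩
    rcases mem_lexmax_or_dm htrans hy with h | h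
    · exact mem_dm.2 ⟨y, h, hr⟩
    · rcases mem_dm.1 h with ⟨z, hz, hrz⟩
      exact mem_dm.2 ⟨z, hz, htrans hr hrz⟩
  · rintro ⟨y, hy, hr⟩
    exact mem_dl.2 ⟨y, mem_lexmax hy, hr⟩

/-! ### mulLe / mulLt lemmas -/

lemma mulLe_refl (M : Multiset β) : mulLe r M M :=
  ⟨M, 0, 0, by simp, by simp, by simp⟩

lemma mulLe_of_le {M N : Multiset β} (h : M ≤ N) : mulLe r M N := by
  classical
  exact ⟨M, N - M, 0, by simp, (add_tsub_cancel_of_le h).symm, by simp⟩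

lemma mulLe_add {M N M' N' : Multiset β} (h : mulLe r M N) (h' : mulLe r M' N') :
    mulLe r (M + M') (N + N') := by
  obtain ⟨I, J, K, hM, hN, hK⟩ := h
  obtain ⟨I', J', K', hM', hN', hK'⟩ := h'
  refine ⟨I + I', J + J', K + K', ?_, ?_, ?_⟩
  · rw [hM, hM']; abel
  · rw [hN, hN']; abel
  · intro k hk
    rcases Multiset.mem_add.1 hk with hk | hk
    · rcases mem_dm.1 (hK k hk) with ⟨j, hj, hr⟩
      exact mem_dm.2 ⟨j, Multiset.mem_add.2 (Or.inl hj), hr⟩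
    · rcases mem_dm.1 (hK' k hk) with ⟨j, hj, hr⟩
      exact mem_dm.2 ⟨j, Multiset.mem_add.2 (Or.inr hj), hr⟩

lemma mulLt_add_mulLe {M N M' N' : Multiset β} (h : mulLt r M N) (h' : mulLe r M' N') :
    mulLt r (M + M') (N + N') := by
  obtain ⟨I, J, K, hM, hN, hK, hJ⟩ := h
  obtain ⟨I', J', K', hM', hN', hK'⟩ := h'
  refine ⟨I + I', J + J', K + K', ?_, ?_, ?_, ?_⟩
  · rw [hM, hM']; abel
  · rw [hN, hN']; abel
  · intro k hk
    rcases Multiset.mem_add.1 hk with hk | hk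
    · rcases mem_dm.1 (hK k hk) with ⟨j, hj, hr⟩
      exact mem_dm.2 ⟨j, Multiset.mem_add.2 (Or.inl hj), hr⟩
    · rcases mem_dm.1 (hK' k hk) with ⟨j, hj, hr⟩
      exact mem_dm.2 ⟨j, Multiset.mem_add.2 (Or.inr hj), hr⟩
  · intro h0
    apply hJ
    have hc := congrArg Multiset.card h0
    simp only [Multiset.card_add, Multiset.card_zero] at hc
    exact Multiset.card_eq_zero.1 (by omega)

/-- Riesz decomposition for multisets -/
lemma multiset_riesz {X Y Z W : Multiset β} (h : X + Y = Z + W) :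
    ∃ U V S T : Multiset β, X = U + V ∧ Y = S + T ∧ Z = U + S ∧ W = V + T := by
  classical
  refine ⟨X ∩ Z, X - Z, Z - X, Y - (Z - X), ?_, ?_, ?_, ?_⟩ <;>
  · ext a
    have hc := congrArg (Multiset.count a) h
    simp only [Multiset.count_add] at hc
    simp only [Multiset.count_add, Multiset.count_inter, Multiset.count_sub]
    omega

lemma mulLe_trans (htrans : Transitive r) {M N P : Multiset β}
    (h1 : mulLe r M N) (h2 : mulLe r N P) : mulLe r M P := by
  obtain ⟨I₁, J₁, K₁, hM, hN₁, hK₁⟩ := h1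
  obtain ⟨I₂, J₂, K₂, hN₂, hP, hK₂⟩ := h2
  obtain ⟨U, V, S, T, hI₁, hJ₁, hI₂, hK₂'⟩ := multiset_riesz (hN₁.symm.trans hN₂)
  have absorb : ∀ x ∈ K₂, x ∈ dm r (S + J₂) := by
    intro x hx
    rcases mem_dm.1 (hK₂ x hx) with ⟨j, hj, hr⟩
    exact mem_dm.2 ⟨j, Multiset.mem_add.2 (Or.inr hj), hr⟩
  refine ⟨U, S + J₂, V + K₁, ?_, ?_, ?_⟩
  · rw [hM, hI₁]; abel
  · rw [hP, hI₂]; abel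
  · intro k hk
    rcases Multiset.mem_add.1 hk with hk | hk
    · exact absorb k (hK₂' ▸ Multiset.mem_add.2 (Or.inl hk))
    · rcases mem_dm.1 (hK₁ k hk) with ⟨j, hj, hr⟩
      rw [hJ₁] at hj
      rcases Multiset.mem_add.1 hj with hj | hj
      · exact mem_dm.2 ⟨j, Multiset.mem_add.2 (Or.inl hj), hr⟩
      · have hjK₂ : j ∈ K₂ := hK₂' ▸ Multiset.mem_add.2 (Or.inr hj)
        rcases mem_dm.1 (absorb j hjK₂) with ⟨j', hj', hr'⟩
        exact mem_dm.2 ⟨j', hj', htrans hr hr'⟩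

/-! ### monotonicity, cancellation, absorption -/

lemma dl_closed (htrans : Transitive r) (σ : List β) :
    ∀ x y, r x y → y ∈ dl r σ → x ∈ dl r σ := by
  rintro x y hxy ⟨z, hz, hrz⟩
  exact ⟨z, hz, htrans hxy hrz⟩

lemma dm_mono (htrans : Transitive r) {M N : Multiset β} (h : mulLe r M N) :
    dm r M ⊆ dm r N := by
  obtain ⟨I, J, K, hM, hN, hK⟩ := h
  intro x hx
  obtain ⟨y, hy, hr⟩ := mem_dm.1 hx
  rw [hM] at hy
  rcases Multiset.mem_add.1 hy with hy | hy
  · exact mem_dm.2 ⟨y, by rw [hN]; exact Multiset.mem_add.2 (Or.inl hy), hr⟩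
  · obtain ⟨j, hj, hrj⟩ := mem_dm.1 (hK y hy)
    exact mem_dm.2 ⟨j, by rw [hN]; exact Multiset.mem_add.2 (Or.inr hj), htrans hr hrj⟩

lemma msub_mono {M N : Multiset β} (S : Set β) (hS : ∀ x y, r x y → y ∈ S → x ∈ S)
    (h : mulLe r M N) : mulLe r (msub M S) (msub N S) := by
  obtain ⟨I, J, K, hM, hN, hK⟩ := h
  refine ⟨msub I S, msub J S, msub K S, by rw [hM, msub_add], by rw [hN, msub_add], ?_⟩
  intro k hk
  obtain ⟨hkK, hkS⟩ := mem_msub.1 hk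
  obtain ⟨j, hj, hrj⟩ := mem_dm.1 (hK k hkK)
  have hjS : j ∉ S := fun hjS => hkS (hS k j hrj hjS)
  exact mem_dm.2 ⟨j, mem_msub.2 ⟨hj, hjS⟩, hrj⟩

lemma mulLe_cancel_cons (htrans : Transitive r) (hirr : ∀ x : β, ¬ r x x) {z : β}
    {M N : Multiset β} (h : mulLe r (z ::ₘ M) (z ::ₘ N)) : mulLe r M N := by
  classical
  obtain ⟨I, J, K, hM, hN, hK⟩ := h
  by_cases hzI : z ∈ I
  · refine ⟨I.erase z, J, K, ?_, ?_, hK⟩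
    · have : z ::ₘ M = z ::ₘ (I.erase z + K) := by
        rw [hM, ← Multiset.cons_add, Multiset.cons_erase hzI]
      exact (Multiset.cons_inj_right z).1 this
    · have : z ::ₘ N = z ::ₘ (I.erase z + J) := by
        rw [hN, ← Multiset.cons_add, Multiset.cons_erase hzI]
      exact (Multiset.cons_inj_right z).1 this
  · have hzK : z ∈ K := by
      have hz : z ∈ I + K := by rw [← hM]; exact Multiset.mem_cons_self z M
      rcases Multiset.mem_add.1 hz with h' | h'
      · exact absurd h' hzI
      · exact h'
    have hzJ : z ∈ J := by
      have hz : z ∈ I + J := by rw [← hN]; exact Multiset.mem_cons_self z N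
      rcases Multiset.mem_add.1 hz with h' | h'
      · exact absurd h' hzI
      · exact h'
    refine ⟨I, J.erase z, K.erase z, ?_, ?_, ?_⟩
    · have e : z ::ₘ (I + K.erase z) = I + K := by
        rw [← Multiset.add_cons, Multiset.cons_erase hzK]
      exact (Multiset.cons_inj_right z).1 (hM.trans e.symm)
    · have e : z ::ₘ (I + J.erase z) = I + J := by
        rw [← Multiset.add_cons, Multiset.cons_erase hzJ]
      exact (Multiset.cons_inj_right z).1 (hN.trans e.symm)
    · intro k hk
      have hkK : k ∈ K := Multiset.mem_of_mem_erase hk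
      obtain ⟨j, hj, hrj⟩ := mem_dm.1 (hK k hkK)
      by_cases hjz : j = z
      · subst hjz
        obtain ⟨j', hj', hrj'⟩ := mem_dm.1 (hK j hzK)
        have hj'z : j' ≠ j := fun he => hirr j' (by rw [he] at hrj' ⊢; exact hrj')
        exact mem_dm.2 ⟨j', (Multiset.mem_erase_of_ne hj'z).2 hj', htrans hrj hrj'⟩
      · exact mem_dm.2 ⟨j, (Multiset.mem_erase_of_ne hjz).2 hj, hrj⟩

lemma mulLe_cancel (htrans : Transitive r) (hirr : ∀ x : β, ¬ r x x) (Z : Multiset β) :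
    ∀ {M N : Multiset β}, mulLe r (Z + M) (Z + N) → mulLe r M N := by
  induction Z using Multiset.induction_on with
  | empty => intro M N h; simpa using h
  | cons z Z ih =>
    intro M N h
    rw [Multiset.cons_add, Multiset.cons_add] at h
    exact ih (mulLe_cancel_cons htrans hirr h)

lemma mulLe_absorb {M N R : Multiset β} (h : mulLe r M N)
    (hR : ∀ x ∈ R, x ∈ dm r N ∧ x ∉ dm r M) : mulLe r (M + R) N := by
  obtain ⟨I, J, K, hM, hN, hK⟩ := h
  refine ⟨I, J, K + R, by rw [hM, add_assoc], hN, ?_⟩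
  intro k hk
  rcases Multiset.mem_add.1 hk with hk | hk
  · exact hK k hk
  · obtain ⟨hdN, hdM⟩ := hR k hk
    obtain ⟨n, hn, hrn⟩ := mem_dm.1 hdN
    rw [hN] at hn
    rcases Multiset.mem_add.1 hn with hn | hn
    · exact absurd (mem_dm.2 ⟨n, by rw [hM]; exact Multiset.mem_add.2 (Or.inl hn), hrn⟩) hdM
    · exact mem_dm.2 ⟨n, hn, hrn⟩

lemma mulLe_congr {M M' N N' : Multiset β} (h : mulLe r M N) (hM : M = M') (hN : N = N') :
    mulLe r M' N' := hM ▸ hN ▸ h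

lemma mulLt_congr {M M' N N' : Multiset β} (h : mulLt r M N) (hM : M = M') (hN : N = N') :
    mulLt r M' N' := hM ▸ hN ▸ h

/-- the key measure-decrease lemma -/
lemma lemA (htrans : Transitive r) (hirr : ∀ x : β, ¬ r x x) {a : β} {Bm M M' N : Multiset β}
    (h : mulLe r ({a} + msub M (ds r {a})) ({a} + Bm)) :
    mulLt r (M' + M) ({a} + Bm + msub M' (ds r {a}) + N) := by
  have h0 : mulLe r (msub M (ds r {a})) Bm := mulLe_cancel htrans hirr {a} h
  obtain ⟨I₁, J₁, K₁, hMd, hB, hK₁⟩ := h0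
  obtain ⟨Q, hQdec, hQ⟩ := msub_decomp M (ds r {a})
  obtain ⟨P, hPdec, hP⟩ := msub_decomp M' (ds r {a})
  have haJ : a ∈ ({a} + J₁ + N : Multiset β) :=
    Multiset.mem_add.2 (Or.inl (Multiset.mem_add.2 (Or.inl (Multiset.mem_singleton_self a))))
  refine ⟨I₁ + msub M' (ds r {a}), {a} + J₁ + N, K₁ + P + Q, ?_, ?_, ?_, ?_⟩
  · conv_lhs => rw [hPdec, hQdec, hMd]
    abel
  · rw [hB]; abel
  · intro k hk
    rcases Multiset.mem_add.1 hk with hk | hk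
    · rcases Multiset.mem_add.1 hk with hk | hk
      · obtain ⟨j, hj, hrj⟩ := mem_dm.1 (hK₁ k hk)
        exact mem_dm.2 ⟨j, Multiset.mem_add.2 (Or.inl (Multiset.mem_add.2 (Or.inr hj))), hrj⟩
      · obtain ⟨u, hu, hru⟩ := mem_ds.1 (hP k hk)
        rw [Set.mem_singleton_iff.1 hu] at hru
        exact mem_dm.2 ⟨a, haJ, hru⟩
    · obtain ⟨u, hu, hru⟩ := mem_ds.1 (hQ k hk)
      rw [Set.mem_singleton_iff.1 hu] at hru
      exact mem_dm.2 ⟨a, haJ, hru⟩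
  · intro h0'
    have := congrArg Multiset.card h0'
    simp only [Multiset.card_add, Multiset.card_singleton, Multiset.card_zero] at this
    omega

/-! ### pasting of decreasing diagrams -/

lemma decreasing_swap {τ σ σ' τ' : List β} (h : Decreasing r τ σ σ' τ') :
    Decreasing r σ τ τ' σ' :=
  ⟨by rw [add_comm]; exact h.2, by rw [add_comm]; exact h.1⟩

lemma dl_bound (htrans : Transitive r) {τ σa τ' : List β}
    (h : mulLe r (lexmax r (σa ++ τ')) (lexmax r τ + lexmax r σa)) :
    dl r τ' ⊆ dl r τ ∪ dl r σa := by
  intro x hx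
  rw [dl_eq_dm htrans] at hx
  obtain ⟨t, ht, hrt⟩ := mem_dm.1 hx
  by_cases hts : t ∈ dl r σa
  · obtain ⟨s, hs, hrs⟩ := mem_dl.1 hts
    exact Or.inr (mem_dl.2 ⟨s, hs, htrans hrt hrs⟩)
  · have htm : t ∈ lexmax r (σa ++ τ') := by
      rw [lexmax_append]
      exact Multiset.mem_add.2 (Or.inr (mem_msub.2 ⟨ht, hts⟩))
    have hx2 : x ∈ dm r (lexmax r τ + lexmax r σa) :=
      dm_mono htrans h (mem_dm.2 ⟨t, htm, hrt⟩)
    rw [dm_add, ← dl_eq_dm htrans, ← dl_eq_dm htrans] at hx2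
    exact hx2

/-- horizontal pasting of decreasing diagrams -/
lemma pasteH (htrans : Transitive r) (hirr : ∀ x : β, ¬ r x x)
    {τ σa σ' τ' σb σ'' τ'' : List β}
    (h1 : Decreasing r τ σa σ' τ') (h2 : Decreasing r τ' σb σ'' τ'') :
    Decreasing r τ (σa ++ σb) (σ' ++ σ'') τ'' := by
  obtain ⟨h11, h12⟩ := h1
  obtain ⟨h21, h22⟩ := h2
  constructor
  · -- |(σa++σb)++τ''| ≼ |τ| + |σa++σb|
    have e1 : lexmax r ((σa ++ σb) ++ τ'') =
        lexmax r σa + msub (lexmax r (σb ++ τ'')) (dl r σa) := by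
      rw [List.append_assoc, lexmax_append]
    have hmono := msub_mono (dl r σa) (dl_closed htrans σa) h21
    rw [msub_add] at hmono
    have h11' := h11
    rw [lexmax_append] at h11'
    have step2 := mulLe_add h11' (mulLe_refl (msub (lexmax r σb) (dl r σa)))
    rw [e1]
    refine mulLe_trans htrans (mulLe_add (mulLe_refl (lexmax r σa)) hmono) ?_
    refine mulLe_congr step2 (by abel) ?_
    rw [lexmax_append (σ := σa) (τ := σb)]
    abel
  · -- |τ++(σ'++σ'')| ≼ |τ| + |σa++σb|
    obtain ⟨R, hsplit, hRmem⟩ :=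
      msub_split (lexmax r σ'') (dl r (τ ++ σ')) (dl r τ' ∪ dl r σa)
    have e1 : lexmax r (τ ++ (σ' ++ σ'')) =
        lexmax r (τ ++ σ') + msub (lexmax r σ'') (dl r (τ ++ σ')) := by
      rw [← List.append_assoc, lexmax_append (σ := τ ++ σ')]
    have hP : mulLe r (msub (lexmax r σ'') (dl r (τ ++ σ') ∪ (dl r τ' ∪ dl r σa)))
        (msub (lexmax r σb) (dl r σa)) := by
      have h22' := h22
      rw [lexmax_append] at h22'
      have hc : mulLe r (msub (lexmax r σ'') (dl r τ')) (lexmax r σb) :=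
        mulLe_cancel htrans hirr (lexmax r τ') h22' 
      have hm := msub_mono (dl r σa) (dl_closed htrans σa) hc
      rw [msub_msub] at hm
      exact mulLe_trans htrans (mulLe_of_le (msub_union_le _ _ _)) hm
    have hAbs : mulLe r (lexmax r (τ ++ σ') + R) (lexmax r τ + lexmax r σa) := by
      refine mulLe_absorb h12 ?_
      intro x hx
      obtain ⟨hxin, hxout⟩ := hRmem x hx
      constructor
      · rw [dm_add, ← dl_eq_dm htrans, ← dl_eq_dm htrans]
        rcases hxin with hx1 | hx2
        · exact dl_bound htrans h11 hx1
        · exact Or.inr hx2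
      · rw [← dl_eq_dm htrans]
        exact hxout
    rw [e1, hsplit]
    refine mulLe_congr (mulLe_add hAbs hP) (by abel) ?_
    rw [lexmax_append (σ := σa) (τ := σb)]
    abel

/-- vertical pasting of decreasing diagrams -/
lemma pasteV (htrans : Transitive r) (hirr : ∀ x : β, ¬ r x x)
    {τa σ σ' τ' τb σ'' τ'' : List β}
    (h1 : Decreasing r τa σ σ' τ') (h2 : Decreasing r τb σ' σ'' τ'') :
    Decreasing r (τa ++ τb) σ σ'' (τ' ++ τ'') :=
  decreasing_swap (pasteH htrans hirr (decreasing_swap h1) (decreasing_swap h2))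

/-! ### well-foundedness of the multiset extension -/

lemma mulLt_cutExpand : ∀ (J I K : Multiset β), (∀ k ∈ K, k ∈ dm r J) → J ≠ 0 →
    Relation.TransGen (Relation.CutExpand r) (I + K) (I + J) := by
  intro J
  induction J using Multiset.induction_on with
  | empty => intro I K h h0; exact absurd rfl h0
  | cons a J ih =>
    intro I K hK _
    obtain ⟨K₁, K₂, hsplit, hK₁mem, hK₂mem⟩ :
        ∃ K₁ K₂ : Multiset β, K₁ + K₂ = K ∧ (∀ x ∈ K₁, r x a) ∧ (∀ x ∈ K₂, ¬ r x a) := by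
      classical
      exact ⟨Multiset.filter (fun k => r k a) K, Multiset.filter (fun k => ¬ r k a) K,
        Multiset.filter_add_not _ K, fun x hx => (Multiset.mem_filter.1 hx).2,
        fun x hx => (Multiset.mem_filter.1 hx).2⟩
    have hK₂J : ∀ k ∈ K₂, k ∈ dm r J := by
      intro k hk
      have hkK : k ∈ K := by rw [← hsplit]; exact Multiset.mem_add.2 (Or.inr hk)
      obtain ⟨j, hj, hrj⟩ := mem_dm.1 (hK k hkK)
      rcases Multiset.mem_cons.1 hj with rfl | hj
      · exact absurd hrj (hK₂mem k hk)
      · exact mem_dm.2 ⟨j, hj, hrj⟩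
    have step : Relation.CutExpand r (I + K₁ + J) (I + (a ::ₘ J)) := by
      refine ⟨K₁, a, hK₁mem, ?_⟩
      rw [← Multiset.singleton_add a J]
      abel
    by_cases hJ0 : J = 0
    · subst hJ0
      have hK₂0 : K₂ = 0 := by
        refine Multiset.eq_zero_of_forall_notMem (fun x hx => ?_)
        obtain ⟨j, hj, _⟩ := mem_dm.1 (hK₂J x hx)
        simp at hj
      have hKK : K = K₁ := by rw [← hsplit, hK₂0, add_zero]
      rw [hKK]
      rw [add_zero] at step
      exact Relation.TransGen.single step
    · have t1 : Relation.TransGen (Relation.CutExpand r) (I + K₁ + K₂) (I + K₁ + J) :=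
        ih (I + K₁) K₂ hK₂J hJ0
      have hKeq : I + K = I + K₁ + K₂ := by rw [← hsplit]; abel
      rw [hKeq]
      exact Relation.TransGen.tail t1 step

lemma mulLt_wf (hwf : WellFounded r) : WellFounded (mulLt r) := by
  have hsub : ∀ M N : Multiset β, mulLt r M N → Relation.TransGen (Relation.CutExpand r) M N := by
    rintro M N ⟨I, J, K, hM, hN, hK, hJ⟩
    rw [hM, hN]
    exact mulLt_cutExpand J I K hK hJ
  exact Subrelation.wf (fun {M N} h => hsub M N h) (hwf.cutExpand.transGen)

/-! ### sequences and base cases -/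

lemma lseq_append {α : Type u} {B : α → β → α → Prop} :
    ∀ {a b c : α} {τ σ : List β}, LSeq B a τ b → LSeq B b σ c → LSeq B a (τ ++ σ) c := by
  intro a b c τ σ h1
  revert c
  induction h1 with
  | nil => intro c h2; exact h2
  | cons hstep _ ih => intro c h2; exact LSeq.cons hstep (ih h2)

lemma decreasing_nil_left (σ : List β) : Decreasing r [] σ σ [] := by
  constructor
  · rw [List.append_nil, lexmax_nil, zero_add]
    exact mulLe_refl _
  · rw [lexmax_nil, zero_add]
    exact mulLe_refl _

lemma decreasing_nil_right (τ : List β) : Decreasing r τ [] [] τ := by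
  constructor
  · rw [lexmax_nil, add_zero]
    exact mulLe_refl _
  · rw [List.append_nil, lexmax_nil, add_zero]
    exact mulLe_refl _

lemma dl_singleton (a : β) : dl r [a] = ds r {a} := by
  rw [dl_cons, dl_nil, Set.union_empty]

end Aux


/-- if all local peaks are decreasing then all peaks are decreasing -/
theorem local_peaks_decreasing_imp_peaks_decreasing {α : Type u} {β : Type v}
    (B : α → β → α → Prop) (r : β → β → Prop)
    (htrans : Transitive r) (hwf : WellFounded r)
    (hld : ∀ (a b c : α) (lb lc : β), B a lb b → B a lc c →
      ∃ (d : α) (σ' τ' : List β),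
        LSeq B b σ' d ∧ LSeq B c τ' d ∧ Decreasing r [lb] [lc] σ' τ') :
    ∀ (a b c : α) (τ σ : List β), LSeq B a τ b → LSeq B a σ c →
      ∃ (d : α) (σ' τ' : List β),
        LSeq B b σ' d ∧ LSeq B c τ' d ∧ Decreasing r τ σ σ' τ' := by
  intro a b c τ σ hτ hσ
  have hirr : ∀ x : β, ¬ r x x := fun x => (hwf.isIrrefl).irrefl x
  have main : ∀ m : Multiset β, Acc (mulLt r) m → ∀ (a b c : α) (τ σ : List β),
      LSeq B a τ b → LSeq B a σ c → lexmax r τ + lexmax r σ = m →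
      ∃ (d : α) (σ' τ' : List β),
        LSeq B b σ' d ∧ LSeq B c τ' d ∧ Decreasing r τ σ σ' τ' := by
    intro m hacc
    induction hacc with
    | intro m _ IH =>
      intro a b c τ σ hτ hσ hm
      cases hτ with
      | nil => exact ⟨c, σ, [], hσ, LSeq.nil c, decreasing_nil_left σ⟩
      | cons h1 h2 =>
        rename_i b₀ a₁ τ₁
        cases hσ with
        | nil =>
          exact ⟨b, [], a₁ :: τ₁, LSeq.nil b, LSeq.cons h1 h2, decreasing_nil_right _⟩
        | cons g1 g2 =>
          rename_i c₀ b₁ σ₁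
          obtain ⟨e, κ₁, μ₁, hκ₁, hμ₁, D1⟩ := hld a b₀ c₀ a₁ b₁ h1 g1
          have hyp2 : mulLe r ({a₁} + msub (lexmax r κ₁) (ds r {a₁})) ({a₁} + {b₁}) := by
            have hh := D1.2
            rwa [lexmax_append, lexmax_singleton, lexmax_singleton, dl_singleton] at hh
          have M2 : mulLt r (lexmax r τ₁ + lexmax r κ₁) m := by
            have hl := lemA htrans hirr (M' := lexmax r τ₁)
              (N := msub (lexmax r σ₁) (ds r {b₁})) hyp2
            refine mulLt_congr hl rfl ?_
            rw [← hm, lexmax_cons, lexmax_cons]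
            abel
          obtain ⟨f, κ₂, μ₂, hκ₂, hμ₂, D2⟩ := IH _ M2 b₀ b e τ₁ κ₁ h2 hκ₁ rfl
          have DV : Decreasing r (a₁ :: τ₁) [b₁] κ₂ (μ₁ ++ μ₂) :=
            pasteV htrans hirr D1 D2
          have hyp3 : mulLe r ({b₁} + msub (lexmax r (μ₁ ++ μ₂)) (ds r {b₁}))
              ({b₁} + lexmax r (a₁ :: τ₁)) := by
            have hh := DV.1
            rwa [lexmax_append, lexmax_singleton, dl_singleton,
              add_comm (lexmax r (a₁ :: τ₁)) ({b₁} : Multiset β)] at hh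
          have M3 : mulLt r (lexmax r σ₁ + lexmax r (μ₁ ++ μ₂)) m := by
            have hl := lemA htrans hirr (M' := lexmax r σ₁) (N := (0 : Multiset β)) hyp3
            refine mulLt_congr hl rfl ?_
            rw [← hm, lexmax_cons b₁ σ₁]
            abel
          obtain ⟨g, κ₃, μ₃, hκ₃, hμ₃, D3⟩ :=
            IH _ M3 c₀ c f σ₁ (μ₁ ++ μ₂) g2 (lseq_append hμ₁ hμ₂) rfl
          have DH : Decreasing r (a₁ :: τ₁) (b₁ :: σ₁) (κ₂ ++ μ₃) κ₃ :=
            pasteH htrans hirr DV (decreasing_swap D3)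
          exact ⟨g, κ₂ ++ μ₃, κ₃, lseq_append hκ₂ hμ₃, hκ₃, DH⟩
  exact main _ ((mulLt_wf hwf).apply _) a b c τ σ hτ hσ rfl
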